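/- Let q_e : [0, ∞) → ℝ^K be continuous and periodic with period τ > 0, and ψ : ℝ^K → ℝ_+ continuous. Suppose q : [0, ∞) → ℝ^K is continuous and there exist times 0 = v_0 < v_1 < v_2 < … with v_m → ∞ such that sup_{t∈[0,T]} ‖q(v_{m−1}+t) − q_e(t)‖ → 0 for all T > 0 and v_m − v_{m−1} → τ as m → ∞. Then (1/t)∫_0^t ψ(q(u)) du → (1/τ)∫_0^τ ψ(q_e(u)) du as t → ∞. -/

import Mathlib

open Filter Metric Set

/-- Long-run average cost along a trajectory converging to a limit cycle: if the
shifted trajectories q(v_m + ·) converge uniformly on compacts to the τ-periodic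
limit cycle q_e, and the cycle times v_{m+1} − v_m converge to τ, then the
time-average of ψ(q(·)) converges to the average of ψ(q_e(·)) over one period. -/
theorem stmt13 (K : ℕ) (τ : ℝ) (hτ : 0 < τ)
    (qe q : ℝ → (Fin K → ℝ)) (ψ : (Fin K → ℝ) → ℝ)
    (hqe_cont : Continuous qe) (hq_cont : Continuous q)
    (hper : ∀ t : ℝ, 0 ≤ t → qe (t + τ) = qe t)
    (hψ_cont : Continuous ψ) (hψ_nonneg : ∀ x, 0 ≤ ψ x)
    (v : ℕ → ℝ) (hv0 : v 0 = 0) (hvmono : StrictMono v)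
    (hvtop : Tendsto v atTop atTop)
    (hconv : ∀ T > 0, ∀ ε > 0, ∃ M : ℕ, ∀ m ≥ M, ∀ t ∈ Set.Icc (0:ℝ) T,
      ‖q (v m + t) - qe t‖ ≤ ε)
    (hgap : Tendsto (fun m => v (m + 1) - v m) atTop (nhds τ)) :
    Tendsto (fun t => (1 / t) * ∫ u in (0:ℝ)..t, ψ (q u))
      atTop (nhds ((1 / τ) * ∫ u in (0:ℝ)..τ, ψ (qe u))) := by
  classical
  set f : ℝ → ℝ := fun u => ψ (q u) with hf_def
  set g : ℝ → ℝ := fun u => ψ (qe u) with hg_def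
  have hf : Continuous f := hψ_cont.comp hq_cont
  have hg : Continuous g := hψ_cont.comp hqe_cont
  set d : ℕ → ℝ := fun m => v (m+1) - v m with hd_def
  have hd_pos : ∀ m, 0 < d m := fun m => sub_pos.2 (hvmono (Nat.lt_succ_self m))
  set c : ℝ := ∫ u in (0:ℝ)..τ, g u with hc_def
  -- Step 1: the integral over each cycle converges to c
  have hA : Tendsto (fun m => ∫ u in (v m)..(v (m+1)), f u) atTop (nhds c) := by
    have hshift : ∀ m, (∫ u in (v m)..(v (m+1)), f u) = ∫ t in (0:ℝ)..(d m), f (v m + t) := by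
      intro m
      rw [intervalIntegral.integral_comp_add_left (fun x => f x) (v m)]
      congr 1 <;> ring
    simp only [hshift]
    have hsplit : ∀ m, (∫ t in (0:ℝ)..(d m), f (v m + t))
        = (∫ t in (0:ℝ)..(d m), g t) + ∫ t in (0:ℝ)..(d m), (f (v m + t) - g t) := by
      intro m
      have int1 : IntervalIntegrable (fun t => f (v m + t)) MeasureTheory.volume 0 (d m) :=
        Continuous.intervalIntegrable (by fun_prop) _ _
      rw [intervalIntegral.integral_sub int1 (hg.intervalIntegrable _ _)]
      ring
    simp only [hsplit]
    have h1 : Tendsto (fun m => ∫ t in (0:ℝ)..(d m), g t) atTop (nhds c) :=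
      ((intervalIntegral.continuous_primitive (fun a b => hg.intervalIntegrable a b) 0).tendsto τ).comp hgap
    have h2 : Tendsto (fun m => ∫ t in (0:ℝ)..(d m), (f (v m + t) - g t)) atTop (nhds 0) := by
      set T : ℝ := τ + 1 with hT
      have hT_pos : (0:ℝ) < T := by positivity
      have hK0 : IsCompact (qe '' Icc 0 T) := (isCompact_Icc).image hqe_cont
      have hK1 : IsCompact (cthickening 1 (qe '' Icc 0 T)) := hK0.cthickening
      have hUC := hK1.uniformContinuousOn_of_continuous hψ_cont.continuousOn
      rw [Metric.uniformContinuousOn_iff] at hUC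
      rw [NormedAddCommGroup.tendsto_nhds_zero]
      intro ε hε
      obtain ⟨δ, hδ, hδε⟩ := hUC (ε / (2 * (T + 1))) (by positivity)
      obtain ⟨M, hM⟩ := hconv T hT_pos (min (δ/2) 1) (by positivity)
      have hdT : ∀ᶠ m in atTop, d m ≤ T :=
        hgap.eventually_le_const (show τ < T by linarith)
      filter_upwards [hdT, eventually_ge_atTop M] with m hm1 hm2
      have key : ∀ t ∈ Set.uIoc (0:ℝ) (d m), ‖f (v m + t) - g t‖ ≤ ε / (2 * (T + 1)) := by
        intro t ht
        rw [Set.uIoc_of_le (hd_pos m).le] at ht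
        have ht' : t ∈ Icc (0:ℝ) T := ⟨ht.1.le, ht.2.trans hm1⟩
        have hq_close := hM m hm2 t ht'
        have hqe_mem : qe t ∈ qe '' Icc 0 T := Set.mem_image_of_mem _ ht'
        have hq_mem : q (v m + t) ∈ cthickening 1 (qe '' Icc 0 T) := by
          apply mem_cthickening_of_dist_le _ (qe t) _ _ hqe_mem
          rw [dist_eq_norm]
          exact hq_close.trans (min_le_right _ _)
        have hqe_mem' : qe t ∈ cthickening 1 (qe '' Icc 0 T) :=
          self_subset_cthickening _ hqe_mem
        have hdist : dist (q (v m + t)) (qe t) < δ := by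
          rw [dist_eq_norm]
          calc ‖q (v m + t) - qe t‖ ≤ min (δ/2) 1 := hq_close
            _ ≤ δ/2 := min_le_left _ _
            _ < δ := by linarith
        have := hδε _ hq_mem _ hqe_mem' hdist
        rw [dist_eq_norm] at this
        exact this.le
      calc ‖∫ t in (0:ℝ)..(d m), (f (v m + t) - g t)‖
          ≤ (ε / (2 * (T + 1))) * |d m - 0| :=
            intervalIntegral.norm_integral_le_of_norm_le_const key
        _ ≤ (ε / (2 * (T + 1))) * T := by
            apply mul_le_mul_of_nonneg_left _ (by positivity)
            rw [sub_zero, abs_of_pos (hd_pos m)]; exact hm1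
        _ < ε := by
            rw [div_mul_eq_mul_div, div_lt_iff₀ (by positivity)]
            nlinarith
    have := h1.add h2
    rwa [add_zero] at this
  -- basic facts about the primitive F
  have hint : ∀ a b : ℝ, IntervalIntegrable f MeasureTheory.volume a b :=
    fun a b => hf.intervalIntegrable a b
  set F : ℝ → ℝ := fun t => ∫ u in (0:ℝ)..t, f u with hF_def
  have hFmono : ∀ a b : ℝ, 0 ≤ a → a ≤ b → F a ≤ F b := by
    intro a b _ hab
    have h1 : F a + (∫ u in a..b, f u) = F b :=
      intervalIntegral.integral_add_adjacent_intervals (hint 0 a) (hint a b)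
    have h2 : 0 ≤ ∫ u in a..b, f u :=
      intervalIntegral.integral_nonneg hab (fun u _ => hψ_nonneg _)
    linarith
  have hFnonneg : ∀ t : ℝ, 0 ≤ t → 0 ≤ F t := by
    intro t ht
    have := hFmono 0 t le_rfl ht
    simpa [hF_def] using this
  -- Step 2: Cesàro average of the cycle integrals
  have htel : ∀ n : ℕ, ∑ k ∈ Finset.range n, ∫ u in (v k)..(v (k+1)), f u = F (v n) := by
    intro n
    rw [intervalIntegral.sum_integral_adjacent_intervals (fun k _ => hint _ _), hv0]
  have hS : Tendsto (fun n : ℕ => (n:ℝ)⁻¹ * F (v n)) atTop (nhds c) := by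
    have := hA.cesaro
    simpa only [htel] using this
  -- Step 3: Cesàro average of the gaps
  have hV : Tendsto (fun n : ℕ => (n:ℝ)⁻¹ * v n) atTop (nhds τ) := by
    have h := hgap.cesaro
    have htel2 : ∀ n : ℕ, ∑ i ∈ Finset.range n, (v (i+1) - v i) = v n := by
      intro n; rw [Finset.sum_range_sub, hv0]; ring
    simpa only [hd_def, htel2] using h
  have hvpos : ∀ n : ℕ, 1 ≤ n → 0 < v n := by
    intro n hn
    have := hvmono (show 0 < n by omega)
    rwa [hv0] at this
  -- Step 4: ratios
  have hr : Tendsto (fun n : ℕ => F (v n) / v n) atTop (nhds (c / τ)) := by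
    have h := hS.div hV (ne_of_gt hτ)
    apply h.congr'
    filter_upwards [eventually_ge_atTop 1] with n hn
    have hn' : ((n:ℝ))⁻¹ ≠ 0 := by
      simp only [ne_eq, inv_eq_zero, Nat.cast_eq_zero]; omega
    simp only [Pi.div_apply]
    rw [mul_div_mul_left _ _ hn']
  have hratio : Tendsto (fun n : ℕ => v (n+1) / v n) atTop (nhds 1) := by
    have h0 : Tendsto (fun n : ℕ => d n / v n) atTop (nhds 0) := hgap.div_atTop hvtop
    have h := (tendsto_const_nhds : Tendsto (fun _ : ℕ => (1:ℝ)) atTop (nhds 1)).add h0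
    rw [add_zero] at h
    apply h.congr'
    filter_upwards [eventually_ge_atTop 1] with n hn
    have hvn : v n ≠ 0 := (hvpos n hn).ne'
    field_simp [hd_def]
    simp only [hd_def]; ring
  have hvtop' : Tendsto (fun n : ℕ => v (n+1)) atTop atTop :=
    hvtop.comp (tendsto_add_atTop_nat 1)
  have hratio' : Tendsto (fun n : ℕ => v n / v (n+1)) atTop (nhds 1) := by
    have h0 : Tendsto (fun n : ℕ => d n / v (n+1)) atTop (nhds 0) := hgap.div_atTop hvtop'
    have h := (tendsto_const_nhds : Tendsto (fun _ : ℕ => (1:ℝ)) atTop (nhds 1)).sub h0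
    rw [sub_zero] at h
    apply h.congr'
    filter_upwards [eventually_ge_atTop 1] with n hn
    have hvn : v (n+1) ≠ 0 := (hvpos (n+1) (by omega)).ne'
    field_simp [hd_def]
    simp only [hd_def]; ring
  have hU : Tendsto (fun n : ℕ => F (v (n+1)) / v n) atTop (nhds (c / τ)) := by
    have h := (hr.comp (tendsto_add_atTop_nat 1)).mul hratio
    rw [mul_one] at h
    apply h.congr'
    filter_upwards [eventually_ge_atTop 1] with n hn
    have hvn1 : v (n+1) ≠ 0 := (hvpos (n+1) (by omega)).ne'
    simp only [Function.comp]
    field_simp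
  have hLo : Tendsto (fun n : ℕ => F (v n) / v (n+1)) atTop (nhds (c / τ)) := by
    have h := hr.mul hratio'
    rw [mul_one] at h
    apply h.congr'
    filter_upwards [eventually_ge_atTop 1] with n hn
    have hvn : v n ≠ 0 := (hvpos n hn).ne'
    field_simp
  -- Step 5: sandwich argument
  have hgoal : Tendsto (fun t : ℝ => F t / t) atTop (nhds (c / τ)) := by
    rw [Metric.tendsto_atTop]
    intro ε hε
    obtain ⟨M1, hM1⟩ := Metric.tendsto_atTop.1 hU (ε/2) (by positivity)
    obtain ⟨M2, hM2⟩ := Metric.tendsto_atTop.1 hLo (ε/2) (by positivity)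
    set M : ℕ := max M1 M2 + 1 with hM_def
    refine ⟨v (M + 2), fun t ht => ?_⟩
    have htpos : 0 < t := lt_of_lt_of_le (hvpos (M+2) (by omega)) ht
    have hex : ∃ m, t < v m := (hvtop.eventually_gt_atTop t).exists
    set n := Nat.find hex with hn_def
    have hn_lt : t < v n := Nat.find_spec hex
    have hn_ge : M + 3 ≤ n := by
      by_contra h
      push_neg at h
      have h1 : v n ≤ v (M+2) := hvmono.monotone (by omega)
      linarith [le_trans h1 ht]
    have hp : v (n-1) ≤ t := by
      have h := Nat.find_min hex (show n - 1 < n by omega)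
      push_neg at h
      exact h
    set p := n - 1 with hp_def
    have hpn : n = p + 1 := by omega
    have hpM : M ≤ p := by omega
    have hvp_pos : 0 < v p := hvpos p (by omega)
    have ht_le : t ≤ v (p+1) := by rw [← hpn]; exact hn_lt.le
    have hub : F t / t ≤ F (v (p+1)) / v p :=
      div_le_div₀ (hFnonneg _ (hvpos (p+1) (by omega)).le)
        (hFmono t (v (p+1)) htpos.le ht_le) hvp_pos hp
    have hlb : F (v p) / v (p+1) ≤ F t / t :=
      div_le_div₀ (hFnonneg t htpos.le)
        (hFmono (v p) t hvp_pos.le hp) htpos ht_le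
    have d1 := hM1 p (le_trans (by omega : M1 ≤ M) hpM)
    have d2 := hM2 p (le_trans (by omega : M2 ≤ M) hpM)
    rw [Real.dist_eq, abs_lt] at d1 d2 ⊢
    constructor <;> [linarith [hlb]; linarith [hub]]
  -- conclude
  have heq : (fun t : ℝ => (1/t) * ∫ u in (0:ℝ)..t, f u) = fun t : ℝ => F t / t := by
    funext t
    rw [one_div, inv_mul_eq_div]
  rw [show (1/τ) * (∫ u in (0:ℝ)..τ, g u) = c / τ by rw [one_div, inv_mul_eq_div]]
  rw [heq]
  exact hgoal
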